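/- Fix σ², G, K, η, p, p_b, W, λ > 0. Let z† be the unique z > 1 with z·ln z − z + 1 = G²ηp/σ², and E^lim := p_b(z†−1)σ²/((z†−1)σ² + Gη(pG + p_b·K)). Then for every E with 0 ≤ E ≤ E^lim, setting τ(E) := ((z†−1)σ² − GηEK)/((z†−1)σ² + G²ηp), one has λW(1 − τ(E))·log₂(1 + Gη(τ(E)·p·G + E·K)/((1 − τ(E))σ²)) = λW·Gη(pG + EK)/(z†·σ²·ln 2). -/
import Mathlib


/-- For 0 ≤ E ≤ E^lim, plugging τ(E) = ((z†−1)σ² − GηEK)/((z†−1)σ² + G²ηp)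
into the weighted throughput gives λW·Gη(pG + EK)/(z†σ² ln 2). -/
theorem stmt_6 (σ2 G K η p pb W lam : ℝ)
    (hσ2 : 0 < σ2) (hG : 0 < G) (hK : 0 < K) (hη : 0 < η)
    (hp : 0 < p) (hpb : 0 < pb) (hW : 0 < W) (hlam : 0 < lam)
    (zdag : ℝ) (hz1 : 1 < zdag)
    (hz : zdag * Real.log zdag - zdag + 1 = G ^ 2 * η * p / σ2)
    (Elim : ℝ)
    (hElim : Elim = pb * (zdag - 1) * σ2 / ((zdag - 1) * σ2 + G * η * (p * G + pb * K))) :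
    ∀ E : ℝ, 0 ≤ E → E ≤ Elim →
      ∀ τE : ℝ, τE = ((zdag - 1) * σ2 - G * η * E * K) / ((zdag - 1) * σ2 + G ^ 2 * η * p) →
        lam * W * (1 - τE) *
            Real.logb 2 (1 + G * η * (τE * p * G + E * K) / ((1 - τE) * σ2)) =
          lam * W * G * η * (p * G + E * K) / (zdag * σ2 * Real.log 2) := by
  intro E hE0 hEle τE hτ
  have hz0 : 0 < zdag - 1 := by linarith
  have hA : 0 < (zdag - 1) * σ2 := by positivity
  have hB : 0 < G ^ 2 * η * p := by positivity
  have hC : 0 ≤ G * η * E * K := by positivity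
  have hD : 0 < (zdag - 1) * σ2 + G ^ 2 * η * p := by linarith
  have h1τ : 1 - τE = (G * η * E * K + G ^ 2 * η * p) /
      ((zdag - 1) * σ2 + G ^ 2 * η * p) := by
    rw [hτ]; field_simp; ring
  have h1τpos : 0 < 1 - τE := by
    rw [h1τ]; positivity
  have harg : 1 + G * η * (τE * p * G + E * K) / ((1 - τE) * σ2) = zdag := by
    rw [h1τ, hτ]
    have hnum : 0 < G * η * E * K + G ^ 2 * η * p := by linarith
    field_simp
    ring
  rw [harg, Real.logb]
  have hz' : σ2 * (zdag * Real.log zdag - zdag + 1) = G ^ 2 * η * p := by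
    rw [hz]; field_simp
  have hlog : Real.log zdag = (G ^ 2 * η * p / σ2 + zdag - 1) / zdag := by
    field_simp
    linear_combination hz'
  have hzpos : (0:ℝ) < zdag := by linarith
  have hlog2 : Real.log 2 ≠ 0 := ne_of_gt (Real.log_pos (by norm_num))
  rw [hlog, h1τ]
  field_simp
  ring
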